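/- arXiv:2104.00600 — 2 statements merged into one kernel-verified Lean document; each statement's English description precedes it below -/
import Mathlib

section
/- Let G be a graph, u ∈ V(G), and for an integer k ≥ 1 let G_{(u,k)} denote the graph obtained from G by adding k new vertices which are pairwise adjacent and each adjacent to u. Then for every integer k ≥ 2, the domination polynomials satisfy D_{G_{(u,k)}}(x) = (x+1)·D_{G_{(u,k−1)}}(x) + x·D_{G∖u}(x), where G∖u is the induced subgraph on V(G) ∖ {u}. -/
open scoped Classical

/-- The family of all dominating sets of `G`, as a `Finset` of `Finset`s. -/
noncomputable def domSets {V : Type*} [Fintype V] (G : SimpleGraph V) :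
    Finset (Finset V) :=
  Finset.univ.filter fun S => ∀ v ∉ S, ∃ u ∈ S, G.Adj u v

/-- The average order of a dominating set of `G`. -/
noncomputable def avd {V : Type*} [Fintype V] (G : SimpleGraph V) : ℚ :=
  (∑ S ∈ domSets G, (S.card : ℚ)) / ((domSets G).card : ℚ)

/-- A leaf is a vertex of degree one. -/
noncomputable def IsLeaf {V : Type*} [Fintype V] (G : SimpleGraph V) (v : V) : Prop :=
  G.degree v = 1

/-- The set of leaf neighbors of `w` in `G`. -/
noncomputable def leafNbrSet {V : Type*} [Fintype V] (G : SimpleGraph V) (w : V) : Set V :=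
  {v | G.Adj w v ∧ IsLeaf G v}

/-- A support vertex is a vertex adjacent to at least one leaf. -/
noncomputable def IsSupport {V : Type*} [Fintype V] (G : SimpleGraph V) (w : V) : Prop :=
  ∃ v, G.Adj w v ∧ IsLeaf G v

/-- The domination polynomial of `G`, evaluated at `x`. -/
noncomputable def domPoly {V : Type*} [Fintype V] (G : SimpleGraph V) (x : ℚ) : ℚ :=
  ∑ S ∈ domSets G, x ^ S.card


/-- `glueClique G u k` is the graph obtained from `G` by adding `k` new vertices which are
pairwise adjacent and each adjacent to `u` (so `u` together with the new vertices induces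
a complete graph `K_{k+1}`). -/
def glueClique {V : Type*} (G : SimpleGraph V) (u : V) (k : ℕ) :
    SimpleGraph (V ⊕ Fin k) :=
  SimpleGraph.fromRel fun a b =>
    match a, b with
    | Sum.inl x, Sum.inl y => G.Adj x y
    | Sum.inl x, Sum.inr _ => x = u
    | Sum.inr _, Sum.inl y => y = u
    | Sum.inr _, Sum.inr _ => True

section Aux

open Finset Sum

variable {V : Type*} [Fintype V]

lemma glue_adj_inl_inl {G : SimpleGraph V} {u : V} {k : ℕ} {a b : V} :
    (glueClique G u k).Adj (inl a) (inl b) ↔ G.Adj a b := by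
  simp only [glueClique, SimpleGraph.fromRel_adj, ne_eq]
  constructor
  · rintro ⟨-, h | h⟩
    · exact h
    · exact h.symm
  · intro h
    exact ⟨by simp [h.ne], Or.inl h⟩

lemma glue_adj_inl_inr {G : SimpleGraph V} {u : V} {k : ℕ} {a : V} {j : Fin k} :
    (glueClique G u k).Adj (inl a) (inr j) ↔ a = u := by
  simp only [glueClique, SimpleGraph.fromRel_adj, ne_eq]
  constructor
  · rintro ⟨-, h | h⟩ <;> exact h
  · intro h
    exact ⟨by simp, Or.inl h⟩

lemma glue_adj_inr_inl {G : SimpleGraph V} {u : V} {k : ℕ} {b : V} {i : Fin k} :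
    (glueClique G u k).Adj (inr i) (inl b) ↔ b = u := by
  simp only [glueClique, SimpleGraph.fromRel_adj, ne_eq]
  constructor
  · rintro ⟨-, h | h⟩ <;> exact h
  · intro h
    exact ⟨by simp, Or.inl h⟩

lemma glue_adj_inr_inr {G : SimpleGraph V} {u : V} {k : ℕ} {i j : Fin k} :
    (glueClique G u k).Adj (inr i) (inr j) ↔ i ≠ j := by
  simp only [glueClique, SimpleGraph.fromRel_adj, ne_eq]
  constructor
  · rintro ⟨h, -⟩
    exact fun hij => h (by rw [hij])
  · intro h
    exact ⟨by simp [h], Or.inl trivial⟩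

/-- The domination condition on `V \\ {u}`. -/
def domA (G : SimpleGraph V) (u : V) (A : Finset V) : Prop :=
  ∀ v ∉ A, v ≠ u → ∃ a ∈ A, G.Adj a v

/-- Auxiliary polynomial: sum over sets dominating all of `V \ {u}`. -/
noncomputable def auxF (G : SimpleGraph V) (u : V) (x : ℚ) : ℚ :=
  ∑ A ∈ Finset.univ.filter (fun A : Finset V => domA G u A), x ^ A.card

/-- Auxiliary polynomial: sum over sets avoiding `u` and dominating all of `V \ {u}`. -/
noncomputable def auxH (G : SimpleGraph V) (u : V) (x : ℚ) : ℚ :=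
  ∑ A ∈ Finset.univ.filter (fun A : Finset V => u ∉ A ∧ domA G u A), x ^ A.card

lemma sum_pow_card (k : ℕ) (x : ℚ) :
    ∑ B : Finset (Fin k), x ^ B.card = (x + 1) ^ k := by
  have h := Finset.prod_add (fun _ : Fin k => x) (fun _ : Fin k => 1) Finset.univ
  simp only [Finset.prod_const, Finset.prod_const_one, one_pow, mul_one, Finset.powerset_univ,
    Finset.card_univ, Fintype.card_fin] at h
  exact h.symm

lemma dom_glue_iff {G : SimpleGraph V} {u : V} {k : ℕ} (hk : 1 ≤ k)
    (S : Finset (V ⊕ Fin k)) :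
    (∀ v ∉ S, ∃ a ∈ S, (glueClique G u k).Adj a v) ↔
      ((∀ v ∉ S.toLeft, v ≠ u → ∃ a ∈ S.toLeft, G.Adj a v) ∧
        (S.toRight.Nonempty ∨ u ∈ S.toLeft)) := by
  constructor
  · intro hP
    constructor
    · intro v hv hvu
      obtain ⟨a, ha, hadj⟩ := hP (inl v) (by simpa using hv)
      match a with
      | inl a' =>
        exact ⟨a', by simpa using ha, glue_adj_inl_inl.mp hadj⟩
      | inr i =>
        exact absurd (glue_adj_inr_inl.mp hadj) hvu
    · by_contra hcon
      push_neg at hcon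
      obtain ⟨h1, h2⟩ := hcon
      have hj : (inr ⟨0, hk⟩ : V ⊕ Fin k) ∉ S := by
        intro h
        have : (⟨0, hk⟩ : Fin k) ∈ S.toRight := by simpa using h
        simp [h1] at this
      obtain ⟨a, ha, hadj⟩ := hP _ hj
      match a with
      | inl a' =>
        have : a' = u := glue_adj_inl_inr.mp hadj
        exact h2 (by simpa [← this] using ha)
      | inr i =>
        have : i ∈ S.toRight := by simpa using ha
        simp [h1] at this
  · rintro ⟨hD, hB⟩ v hv
    match v with
    | inl w =>
      by_cases hwu : w = u
      · subst hwu
        rcases hB with ⟨i, hi⟩ | hu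
        · exact ⟨inr i, by simpa using hi, glue_adj_inr_inl.mpr rfl⟩
        · exact absurd (by simpa using hu) hv
      · obtain ⟨a, ha, hadj⟩ := hD w (by simpa using hv) hwu
        exact ⟨inl a, by simpa using ha, glue_adj_inl_inl.mpr hadj⟩
    | inr j =>
      rcases hB with ⟨i, hi⟩ | hu
      · have hij : i ≠ j := by
          rintro rfl
          exact hv (by simpa using hi)
        exact ⟨inr i, by simpa using hi, glue_adj_inr_inr.mpr hij⟩
      · exact ⟨inl u, by simpa using hu, glue_adj_inl_inr.mpr rfl⟩

/-- The key formula: for `k ≥ 1`,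
`D_{G_{(u,k)}}(x) = (x+1)^k · auxF − auxH`. -/
lemma domPoly_glue_eq (G : SimpleGraph V) (u : V) {k : ℕ} (hk : 1 ≤ k) (x : ℚ) :
    domPoly (glueClique G u k) x = (x + 1) ^ k * auxF G u x - auxH G u x := by
  classical
  have step1 : domPoly (glueClique G u k) x =
      ∑ A : Finset V, ∑ B : Finset (Fin k),
        (if domA G u A ∧ (B.Nonempty ∨ u ∈ A) then x ^ (A.card + B.card) else 0) := by
    rw [domPoly]
    have h1 : ∑ S ∈ domSets (glueClique G u k), x ^ S.card
        = ∑ p ∈ Finset.univ.filter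
            (fun p : Finset V × Finset (Fin k) => domA G u p.1 ∧ (p.2.Nonempty ∨ u ∈ p.1)),
            x ^ (p.1.card + p.2.card) := by
      refine Finset.sum_nbij' (fun S => (S.toLeft, S.toRight)) (fun p => p.1.disjSum p.2)
        ?_ ?_ ?_ ?_ ?_
      · intro S hS
        simp only [domSets, Finset.mem_filter, Finset.mem_univ, true_and] at hS
        rw [Finset.mem_filter]
        exact ⟨Finset.mem_univ _, (dom_glue_iff hk S).mp hS⟩
      · intro p hp
        rw [Finset.mem_filter] at hp
        simp only [domSets, Finset.mem_filter, Finset.mem_univ, true_and]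
        rw [dom_glue_iff hk]
        refine ⟨?_, ?_⟩
        · rw [Finset.toLeft_disjSum]
          exact hp.2.1
        · rw [Finset.toRight_disjSum, Finset.toLeft_disjSum]
          exact hp.2.2
      · intro S hS
        exact S.toLeft_disjSum_toRight
      · intro p hp
        simp
      · intro S hS
        rw [← S.card_toLeft_add_card_toRight]
    rw [h1, Finset.sum_filter]
    exact Fintype.sum_prod_type _
  have inner : ∀ A : Finset V,
      (∑ B : Finset (Fin k), (if domA G u A ∧ (B.Nonempty ∨ u ∈ A) then x ^ (A.card + B.card) else 0)) =
      (if domA G u A then x ^ A.card * (x + 1) ^ k else 0) -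
        (if domA G u A ∧ u ∉ A then x ^ A.card else 0) := by
    intro A
    by_cases hD : domA G u A
    · by_cases hu : u ∈ A
      · rw [if_pos hD, if_neg (fun h => h.2 hu), sub_zero]
        have hterm : ∀ B : Finset (Fin k),
            (if domA G u A ∧ (B.Nonempty ∨ u ∈ A) then x ^ (A.card + B.card) else 0) =
            x ^ A.card * x ^ B.card := fun B => by
          rw [if_pos ⟨hD, Or.inr hu⟩, pow_add]
        rw [Finset.sum_congr rfl fun B _ => hterm B, ← Finset.mul_sum, sum_pow_card]
      · rw [if_pos hD, if_pos ⟨hD, hu⟩]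
        have hterm : ∀ B : Finset (Fin k),
            (if domA G u A ∧ (B.Nonempty ∨ u ∈ A) then x ^ (A.card + B.card) else 0) =
            x ^ A.card * x ^ B.card -
              (if B = ∅ then x ^ A.card * x ^ B.card else 0) := by
          intro B
          by_cases h : B = ∅
          · subst h
            rw [if_neg, if_pos rfl, sub_self]
            rintro ⟨-, h | h⟩
            · exact Finset.not_nonempty_empty h
            · exact hu h
          · rw [if_pos ⟨hD, Or.inl (Finset.nonempty_iff_ne_empty.mpr h)⟩, if_neg h,
              sub_zero, pow_add]
        rw [Finset.sum_congr rfl fun B _ => hterm B, Finset.sum_sub_distrib,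
          ← Finset.mul_sum, sum_pow_card,
          Finset.sum_ite_eq' Finset.univ (∅ : Finset (Fin k))
            (fun B => x ^ A.card * x ^ B.card)]
        simp
    · have hterm : ∀ B : Finset (Fin k),
          (if domA G u A ∧ (B.Nonempty ∨ u ∈ A) then x ^ (A.card + B.card) else 0) = 0 := fun B => by
        rw [if_neg (fun h => hD h.1)]
      rw [Finset.sum_congr rfl fun B _ => hterm B, Finset.sum_const, smul_zero,
        if_neg hD, if_neg (fun h => hD h.1), sub_zero]
  rw [step1, Finset.sum_congr rfl fun A _ => inner A, Finset.sum_sub_distrib]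
  congr 1
  · rw [auxF, Finset.sum_filter, Finset.mul_sum]
    refine Finset.sum_congr rfl fun A _ => ?_
    by_cases h : domA G u A
    · rw [if_pos h, if_pos h, mul_comm]
    · rw [if_neg h, if_neg h, mul_zero]
  · rw [auxH, Finset.sum_filter]
    refine Finset.sum_congr rfl fun A _ => ?_
    by_cases h : domA G u A ∧ u ∉ A
    · rw [if_pos h, if_pos ⟨h.2, h.1⟩]
    · rw [if_neg h, if_neg (fun hh => h ⟨hh.2, hh.1⟩)]

/-- The auxiliary polynomial `auxH` is the domination polynomial of `G − u`. -/
lemma auxH_eq (G : SimpleGraph V) (u : V) (x : ℚ) :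
    auxH G u x = domPoly (G.induce {u}ᶜ) x := by
  classical
  rw [auxH, domPoly, domSets]
  refine Finset.sum_nbij' (fun A => A.subtype (fun v => v ∈ ({u}ᶜ : Set V)))
    (fun S => S.map (Function.Embedding.subtype _)) ?_ ?_ ?_ ?_ ?_
  · intro A hA
    simp only [Finset.mem_filter, Finset.mem_univ, true_and] at hA ⊢
    obtain ⟨huA, hdom⟩ := hA
    intro v hv
    have hvA : (v : V) ∉ A := by simpa using hv
    obtain ⟨a, haA, hadj⟩ := hdom v hvA v.2
    have hau : a ≠ u := fun h => huA (h ▸ haA)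
    refine ⟨⟨a, by simpa using hau⟩, by simpa using haA, ?_⟩
    simpa using hadj
  · intro S hS
    simp only [Finset.mem_filter, Finset.mem_univ, true_and] at hS ⊢
    constructor
    · intro h
      simp only [Finset.mem_map, Function.Embedding.coe_subtype] at h
      obtain ⟨⟨a, ha⟩, -, h2⟩ := h
      exact absurd h2 (by simpa using ha)
    · intro v hv hvu
      have hvmem : v ∈ ({u}ᶜ : Set V) := by simpa using hvu
      have hv' : (⟨v, hvmem⟩ : ({u}ᶜ : Set V)) ∉ S := by
        intro h
        exact hv (Finset.mem_map.mpr ⟨_, h, rfl⟩)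
      obtain ⟨a, ha, hadj⟩ := hS _ hv'
      refine ⟨(a : V), Finset.mem_map.mpr ⟨a, ha, rfl⟩, ?_⟩
      simpa using hadj
  · intro A hA
    simp only [Finset.mem_filter, Finset.mem_univ, true_and] at hA
    rw [Finset.subtype_map, Finset.filter_true_of_mem]
    intro v hv
    simp only [Set.mem_compl_iff, Set.mem_singleton_iff]
    rintro rfl
    exact hA.1 hv
  · intro S hS
    ext v
    simp only [Finset.mem_subtype, Finset.mem_map, Function.Embedding.coe_subtype]
    constructor
    · rintro ⟨⟨a, ha⟩, h1, h2⟩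
      have : (⟨a, ha⟩ : ({u}ᶜ : Set V)) = v := Subtype.ext h2
      exact this ▸ h1
    · intro h
      exact ⟨v, h, rfl⟩
  · intro A hA
    rw [Finset.card_subtype]
    congr 1
    simp only [Finset.mem_filter, Finset.mem_univ, true_and] at hA
    rw [Finset.filter_true_of_mem]
    intro v hv
    simp only [Set.mem_compl_iff, Set.mem_singleton_iff]
    rintro rfl
    exact hA.1 hv

end Aux

/-- For every `k ≥ 2`,
`D_{G_{(u,k)}}(x) = (x+1)·D_{G_{(u,k−1)}}(x) + x·D_{G∖u}(x)`. -/
theorem domPoly_glueClique_rec {V : Type*} [Fintype V] (G : SimpleGraph V) (u : V)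
    (k : ℕ) (hk : 2 ≤ k) (x : ℚ) :
    domPoly (glueClique G u k) x =
      (x + 1) * domPoly (glueClique G u (k - 1)) x + x * domPoly (G.induce {u}ᶜ) x := by
  rw [domPoly_glue_eq G u (by omega : 1 ≤ k) x,
    domPoly_glue_eq G u (by omega : 1 ≤ k - 1) x, ← auxH_eq G u x]
  have hpow : (x + 1) ^ k = (x + 1) * (x + 1) ^ (k - 1) := by
    conv_lhs => rw [show k = (k - 1) + 1 by omega]
    rw [pow_succ]
    ring
  rw [hpow]
  ring
end

section
/- Let T be a tree with |V(T)| ≥ 3 and let u be a vertex of T that is not a support vertex of T and has at most one neighbor in T that is not a support vertex of T. Let G_1 be the graph obtained from T by attaching a new leaf vertex v adjacent to u. Then |𝒟(G_1)| ≤ 5·|𝒟(T∖u)|, where T∖u is the induced subgraph on V(T) ∖ {u}. -/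
open scoped Classical

/-- `addLeaf G u` is the graph obtained from `G` by attaching one new leaf vertex
(the vertex `none`) adjacent to `u`. -/
def addLeaf {V : Type*} (G : SimpleGraph V) (u : V) : SimpleGraph (Option V) :=
  SimpleGraph.fromRel fun a b =>
    match a, b with
    | some x, some y => G.Adj x y
    | some x, none => x = u
    | none, some y => y = u
    | none, none => False


set_option linter.unusedSectionVars false
set_option linter.unusedVariables false
set_option linter.unnecessarySimpa false

section Aux
variable {V : Type*} [Fintype V]

lemma mem_domSets {G : SimpleGraph V} {S : Finset V} :
    S ∈ domSets G ↔ ∀ v ∉ S, ∃ u ∈ S, G.Adj u v := by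
  simp [domSets]

lemma addLeaf_adj_some_some {G : SimpleGraph V} {u x y : V} :
    (addLeaf G u).Adj (some x) (some y) ↔ G.Adj x y := by
  simp only [addLeaf, SimpleGraph.fromRel_adj]
  constructor
  · rintro ⟨hne, h | h⟩
    · exact h
    · exact h.symm
  · intro h
    exact ⟨by simpa using h.ne, Or.inl h⟩

lemma addLeaf_adj_none_some {G : SimpleGraph V} {u y : V} :
    (addLeaf G u).Adj none (some y) ↔ y = u := by
  simp only [addLeaf, SimpleGraph.fromRel_adj]
  constructor
  · rintro ⟨hne, h | h⟩ <;> exact h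
  · rintro rfl; exact ⟨by simp, Or.inl rfl⟩

lemma addLeaf_adj_some_none {G : SimpleGraph V} {u x : V} :
    (addLeaf G u).Adj (some x) none ↔ x = u := by
  rw [SimpleGraph.adj_comm]; exact addLeaf_adj_none_some

/-- projection of a set of `Option V`-vertices onto `V \ {u}`. -/
noncomputable def projF (u : V) (S : Finset (Option V)) : Finset ↥({u}ᶜ : Set V) :=
  Finset.univ.filter fun x => some (x : V) ∈ S

lemma mem_projF {u : V} {S : Finset (Option V)} {x : ↥({u}ᶜ : Set V)} :
    x ∈ projF u S ↔ some (x : V) ∈ S := by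
  simp [projF]

/-- lift of a set of `V \ {u}`-vertices to `Option V`. -/
noncomputable def liftF (u : V) (D : Finset ↥({u}ᶜ : Set V)) : Finset (Option V) :=
  D.image fun x => Option.some x.1

lemma mem_liftF {u : V} {D : Finset ↥({u}ᶜ : Set V)} {a : Option V} :
    a ∈ liftF u D ↔ ∃ b ∈ D, some (b : V) = a :=
  Finset.mem_image

lemma some_mem_liftF {u : V} {D : Finset ↥({u}ᶜ : Set V)} {x : V} :
    some x ∈ liftF u D ↔ ∃ h : x ≠ u, (⟨x, h⟩ : ↥({u}ᶜ : Set V)) ∈ D := by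
  constructor
  · intro h
    obtain ⟨b, hb, hbe⟩ := mem_liftF.mp h
    have hbx : (b : V) = x := by injection hbe
    subst hbx
    exact ⟨b.2, by simpa using hb⟩
  · rintro ⟨h, hm⟩
    exact mem_liftF.mpr ⟨⟨x, h⟩, hm, rfl⟩

lemma none_not_mem_liftF {u : V} {D : Finset ↥({u}ᶜ : Set V)} :
    none ∉ liftF u D := by
  simp [liftF]

lemma liftF_projF_recon {u : V} {S : Finset (Option V)} :
    ∀ a : Option V, a ≠ none → a ≠ some u → (a ∈ S ↔ a ∈ liftF u (projF u S)) := by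
  rintro (_ | x) hn hu
  · exact absurd rfl hn
  · have hxu : x ≠ u := fun h => hu (by rw [h])
    rw [some_mem_liftF]
    constructor
    · intro h; exact ⟨hxu, mem_projF.mpr h⟩
    · rintro ⟨h, hm⟩; exact mem_projF.mp hm

lemma reconA {u : V} {S : Finset (Option V)} (hu : some u ∈ S) (hn : none ∈ S) :
    S = insert (some u) (insert none (liftF u (projF u S))) := by
  ext a
  simp only [Finset.mem_insert]
  by_cases h1 : a = some u
  · subst h1; simp [hu]
  by_cases h2 : a = none
  · subst h2; simp [hn]
  rw [liftF_projF_recon a h2 h1]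
  simp [h1, h2]

lemma reconB {u : V} {S : Finset (Option V)} (hu : some u ∈ S) (hn : none ∉ S) :
    S = insert (some u) (liftF u (projF u S)) := by
  ext a
  simp only [Finset.mem_insert]
  by_cases h1 : a = some u
  · subst h1; simp [hu]
  by_cases h2 : a = none
  · subst h2; simp [hn, none_not_mem_liftF, h1]
  rw [liftF_projF_recon a h2 h1]
  simp [h1]

lemma reconC {u : V} {S : Finset (Option V)} (hu : some u ∉ S) (hn : none ∈ S) :
    S = insert none (liftF u (projF u S)) := by
  ext a
  simp only [Finset.mem_insert]
  by_cases h2 : a = none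
  · subst h2; simp [hn]
  by_cases h1 : a = some u
  · subst h1
    simp only [some_mem_liftF]
    constructor
    · intro h; exact absurd h hu
    · rintro (h | ⟨h, _⟩)
      · exact absurd h (by simp)
      · exact absurd rfl h
  rw [liftF_projF_recon a h2 h1]
  simp [h2]

end Aux

section Key
variable {V : Type*} [Fintype V]

/-- There is a single "special" neighbor `z` of `u` such that any vertex of `T - u`
left undominated by the projection of a dominating set `S` of `addLeaf T u`
must equal `z`, and moreover in that situation `u ∈ S`. -/
lemma exists_special (T : SimpleGraph V) (hconn : T.Connected) (hcard : 2 ≤ Fintype.card V)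
    (u : V) (hone : {x | T.Adj u x ∧ ¬ IsSupport T x}.ncard ≤ 1) :
    ∃ z : V, T.Adj u z ∧ ∀ S : Finset (Option V),
      (∀ w ∉ S, ∃ a ∈ S, (addLeaf T u).Adj a w) →
      ∀ x : V, x ≠ u → some x ∉ S →
      (∀ y, y ≠ u → T.Adj y x → some y ∉ S) → (x = z ∧ some u ∈ S) := by
  classical
  have hnbr : ∃ z, T.Adj u z := by
    obtain ⟨v, hv⟩ := Fintype.exists_ne_of_one_lt_card (by omega) u
    obtain ⟨w⟩ := hconn.preconnected u v
    cases w with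
    | nil => exact absurd rfl hv
    | cons h p => exact ⟨_, h⟩
  set P := ∃ x, T.Adj u x ∧ ¬ IsSupport T x with hP
  refine ⟨if h : P then h.choose else hnbr.choose, ?_, ?_⟩
  · by_cases h : P
    · rw [dif_pos h]; exact h.choose_spec.1
    · rw [dif_neg h]; exact hnbr.choose_spec
  · intro S hS x hxu hxS hxnb
    -- first : x is dominated only via u, so `some u ∈ S` and `T.Adj u x`
    obtain ⟨a, haS, hadj⟩ := hS (some x) hxS
    have huS : some u ∈ S ∧ T.Adj u x := by
      match a, haS, hadj with
      | none, haS, hadj =>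
        exact absurd (addLeaf_adj_none_some.mp hadj) hxu
      | some y, haS, hadj =>
        have hyx : T.Adj y x := addLeaf_adj_some_some.mp hadj
        by_cases hyu : y = u
        · subst hyu; exact ⟨haS, hyx⟩
        · exact absurd haS (hxnb y hyu hyx)
    refine ⟨?_, huS.1⟩
    by_cases hsup : IsSupport T x
    · obtain ⟨ℓ, hxl, hl⟩ := hsup
      by_cases hlu : ℓ = u
      · -- u is a leaf; both x and z are neighbors of u, and u has a unique neighbor
        have hdeg : (T.neighborFinset u).card = 1 := hlu ▸ hl
        obtain ⟨a, ha⟩ := Finset.card_eq_one.mp hdeg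
        have h1 : x ∈ T.neighborFinset u := (T.mem_neighborFinset u x).mpr huS.2
        have h2 : (if h : P then h.choose else hnbr.choose) ∈ T.neighborFinset u := by
          refine (T.mem_neighborFinset u _).mpr ?_
          by_cases h : P
          · rw [dif_pos h]; exact h.choose_spec.1
          · rw [dif_neg h]; exact hnbr.choose_spec
        rw [ha, Finset.mem_singleton] at h1 h2
        rw [h1, h2]
      · -- x has a leaf ℓ ≠ u ; then ℓ forces a contradiction
        exfalso
        by_cases hls : some ℓ ∈ S
        · exact hxnb ℓ hlu hxl.symm hls
        · obtain ⟨b, hbS, hbadj⟩ := hS (some ℓ) hls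
          match b, hbS, hbadj with
          | none, hbS, hbadj =>
            exact hlu (addLeaf_adj_none_some.mp hbadj)
          | some y, hbS, hbadj =>
            have hyl : T.Adj y ℓ := addLeaf_adj_some_some.mp hbadj
            -- ℓ has degree 1, and both x and y are its neighbors
            have hdeg : (T.neighborFinset ℓ).card = 1 := hl
            obtain ⟨a, ha⟩ := Finset.card_eq_one.mp hdeg
            have h1 : x ∈ T.neighborFinset ℓ := (T.mem_neighborFinset ℓ x).mpr hxl.symm
            have h2 : y ∈ T.neighborFinset ℓ := (T.mem_neighborFinset ℓ y).mpr hyl.symm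
            rw [ha, Finset.mem_singleton] at h1 h2
            rw [h2, ← h1] at hbS
            exact hxS hbS
    · -- x is a non-support neighbor of u
      have h : P := ⟨x, huS.2, hsup⟩
      rw [dif_pos h]
      have hz_mem : h.choose ∈ {x | T.Adj u x ∧ ¬ IsSupport T x} := h.choose_spec
      have hx_mem : x ∈ {x | T.Adj u x ∧ ¬ IsSupport T x} := ⟨huS.2, hsup⟩
      exact (Set.ncard_le_one (Set.toFinite _)).mp hone x hx_mem _ hz_mem

end Key

lemma card_five_le {α : Type*} [DecidableEq α] (a b c d e : α) :
    ({a, b, c, d, e} : Finset α).card ≤ 5 := by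
  refine (Finset.card_insert_le _ _).trans (Nat.succ_le_succ ?_)
  refine (Finset.card_insert_le _ _).trans (Nat.succ_le_succ ?_)
  refine (Finset.card_insert_le _ _).trans (Nat.succ_le_succ ?_)
  refine (Finset.card_insert_le _ _).trans (Nat.succ_le_succ ?_)
  simp

/-- If `T` is a tree on at least three vertices, `u` is not a support vertex of `T` and
has at most one non-support neighbor, and `G₁` is obtained from `T` by attaching a new
leaf at `u`, then `|𝒟(G₁)| ≤ 5·|𝒟(T∖u)|`. -/
theorem domSets_addLeaf_le_five {V : Type*} [Fintype V] (T : SimpleGraph V)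
    (htree : T.IsTree) (hn : 3 ≤ Fintype.card V) (u : V)
    (hu : ¬ IsSupport T u)
    (hone : {x | T.Adj u x ∧ ¬ IsSupport T x}.ncard ≤ 1) :
    (domSets (addLeaf T u)).card ≤ 5 * (domSets (T.induce ({u}ᶜ))).card := by
  classical
  obtain ⟨z, hzadj, hzkey⟩ := exists_special T htree.isConnected (by omega) u hone
  set Gu := T.induce ({u}ᶜ : Set V) with hGu
  have hz'mem : z ∈ ({u}ᶜ : Set V) := by simp [hzadj.ne']
  set z' : ↥({u}ᶜ : Set V) := ⟨z, hz'mem⟩ with hz'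
  set f : Finset (Option V) → Finset ↥({u}ᶜ : Set V) :=
    fun S => if projF u S ∈ domSets Gu then projF u S else insert z' (projF u S) with hf
  -- key consequence adapted to subtype form
  have hzk : ∀ S ∈ domSets (addLeaf T u), ∀ y : ↥({u}ᶜ : Set V), y ∉ projF u S →
      (∀ a ∈ projF u S, ¬ Gu.Adj a y) → (y = z' ∧ some u ∈ S) := by
    intro S hS y hy hnb
    have hS' := mem_domSets.mp hS
    have hy' : some (y : V) ∉ S := fun h => hy (mem_projF.mpr h)
    have hnb' : ∀ w, w ≠ u → T.Adj w (y : V) → some w ∉ S := by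
      intro w hwu hw hwS
      exact hnb ⟨w, by simp [hwu]⟩ (mem_projF.mpr hwS) hw
    have hyu : (y : V) ≠ u := Set.mem_compl_singleton_iff.mp y.2
    obtain ⟨h1, h2⟩ := hzkey S hS' (y : V) hyu hy' hnb'
    exact ⟨Subtype.ext h1, h2⟩
  -- f maps dominating sets to dominating sets
  have hmaps : ∀ S ∈ domSets (addLeaf T u), f S ∈ domSets Gu := by
    intro S hS
    by_cases hd : projF u S ∈ domSets Gu
    · rw [hf]; simp only [if_pos hd]; exact hd
    · rw [hf]
      simp only [if_neg hd]
      rw [mem_domSets]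
      intro y hy
      have hy1 : y ≠ z' ∧ y ∉ projF u S := by
        constructor
        · intro h; exact hy (h ▸ Finset.mem_insert_self _ _)
        · intro h; exact hy (Finset.mem_insert_of_mem h)
      by_cases hnb : ∃ a ∈ projF u S, Gu.Adj a y
      · obtain ⟨a, ha, hadj⟩ := hnb
        exact ⟨a, Finset.mem_insert_of_mem ha, hadj⟩
      · push_neg at hnb
        exact absurd (hzk S hS y hy1.2 hnb).1 hy1.1
  -- fibers of f have at most 5 elements
  have hfib : ∀ D ∈ (domSets (addLeaf T u)).image f,
      ((domSets (addLeaf T u)).filter (fun S => f S = D)).card ≤ 5 := by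
    intro D hD
    have hDdom : D ∈ domSets Gu := by
      obtain ⟨S, hS, rfl⟩ := Finset.mem_image.mp hD
      exact hmaps S hS
    have hsub : (domSets (addLeaf T u)).filter (fun S => f S = D) ⊆
        ({insert (some u) (insert none (liftF u D)),
          insert (some u) (liftF u D),
          insert none (liftF u D),
          insert (some u) (insert none (liftF u (D.erase z'))),
          insert (some u) (liftF u (D.erase z'))} : Finset (Finset (Option V))) := by
      intro S hSf
      obtain ⟨hS, hfS⟩ := Finset.mem_filter.mp hSf
      have hSdom := mem_domSets.mp hS
      have huv : some u ∈ S ∨ none ∈ S := by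
        by_cases hn0 : none ∈ S
        · exact Or.inr hn0
        · obtain ⟨a, ha, hadj⟩ := hSdom none hn0
          match a, ha, hadj with
          | none, ha, hadj => exact absurd ha hn0
          | some y, ha, hadj =>
            have hyu : y = u := addLeaf_adj_some_none.mp hadj
            exact Or.inl (hyu ▸ ha)
      simp only [Finset.mem_insert, Finset.mem_singleton]
      rw [hf] at hfS
      simp only at hfS
      by_cases hd : projF u S ∈ domSets Gu
      · rw [if_pos hd] at hfS
        by_cases h1 : some u ∈ S <;> by_cases h2 : none ∈ S
        · exact Or.inl (by rw [← hfS]; exact reconA h1 h2)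
        · exact Or.inr (Or.inl (by rw [← hfS]; exact reconB h1 h2))
        · exact Or.inr (Or.inr (Or.inl (by rw [← hfS]; exact reconC h1 h2)))
        · rcases huv with h | h
          · exact absurd h h1
          · exact absurd h h2
      · rw [if_neg hd] at hfS
        have hz'notin : z' ∉ projF u S := by
          intro hmem
          rw [Finset.insert_eq_self.mpr hmem] at hfS
          exact hd (hfS ▸ hDdom)
        have hproj : projF u S = D.erase z' := by
          rw [← hfS, Finset.erase_insert hz'notin]
        have hu' : some u ∈ S := by
          have hnd : ¬ ∀ y ∉ projF u S, ∃ a ∈ projF u S, Gu.Adj a y :=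
            fun h => hd (mem_domSets.mpr h)
          push_neg at hnd
          obtain ⟨y, hy1, hy2⟩ := hnd
          exact (hzk S hS y hy1 hy2).2
        by_cases h2 : none ∈ S
        · exact Or.inr (Or.inr (Or.inr (Or.inl (by rw [← hproj]; exact reconA hu' h2))))
        · exact Or.inr (Or.inr (Or.inr (Or.inr (by rw [← hproj]; exact reconB hu' h2))))
    exact (Finset.card_le_card hsub).trans (card_five_le _ _ _ _ _)
  calc (domSets (addLeaf T u)).card
      ≤ 5 * ((domSets (addLeaf T u)).image f).card :=
        Finset.card_le_mul_card_image _ 5 hfib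
    _ ≤ 5 * (domSets Gu).card := by
        apply Nat.mul_le_mul_left
        apply Finset.card_le_card
        intro D hD
        obtain ⟨S, hS, rfl⟩ := Finset.mem_image.mp hD
        exact hmaps S hS
end
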